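/- Let s : 𝕋 → ℝ and f : 𝕋ⁿ → ℝ be bounded measurable functions, d a nonzero integer, and M an n×n integer matrix with nonzero determinant. Suppose s(ω₁) = f(ω^M) − f(ω^d) for almost all ω ∈ 𝕋ⁿ. Suppose p is the least positive integer such that e₁ is an eigenvector of M^p, with M^p e₁ = λ e₁ for some integer λ. Then there exists a function g : 𝕋 → ℝ such that for almost every ω₁ ∈ 𝕋, s(ω₁^{d^{p−1}}) = g(ω₁^λ) − g(ω₁^{d^p}). -/

import Mathlib

open MeasureTheory Function

section Stmt2Aux

abbrev Stmt2T1 := AddCircle (1 : ℝ)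

instance : IsProbabilityMeasure (volume : Measure Stmt2T1) :=
  ⟨by rw [AddCircle.measure_univ]; simp⟩

lemma stmt2_mp_hom {G H : Type*} [AddCommGroup G] [TopologicalSpace G] [IsTopologicalAddGroup G]
    [CompactSpace G] [MeasureSpace G] [BorelSpace G]
    [AddCommGroup H] [TopologicalSpace H] [IsTopologicalAddGroup H] [CompactSpace H]
    [MeasureSpace H] [BorelSpace H]
    [Measure.IsAddHaarMeasure (volume : Measure G)]
    [Measure.IsAddHaarMeasure (volume : Measure H)]
    [IsProbabilityMeasure (volume : Measure G)] [IsProbabilityMeasure (volume : Measure H)]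
    (φ : G →+ H) (hc : Continuous φ) (hs : Surjective φ) :
    MeasurePreserving φ volume volume := by
  have h1 : Measure.IsAddHaarMeasure ((volume : Measure G).map φ) :=
    Measure.isAddHaarMeasure_map_of_isFiniteMeasure volume φ hc hs
  have h2 : IsProbabilityMeasure ((volume : Measure G).map φ) :=
    Measure.isProbabilityMeasure_map hc.measurable.aemeasurable
  exact ⟨hc.measurable, Measure.isAddHaarMeasure_eq_of_isProbabilityMeasure _ _⟩

lemma stmt2_mp_integral {α β : Type*} [MeasurableSpace α] [MeasurableSpace β]
    {μ : Measure α} {ν : Measure β} {φ : α → β} (hφ : MeasurePreserving φ μ ν)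
    {h : β → ℝ} (hm : AEStronglyMeasurable h ν) :
    ∫ x, h (φ x) ∂μ = ∫ y, h y ∂ν := by
  rw [← hφ.map_eq] at hm ⊢
  exact (integral_map hφ.measurable.aemeasurable hm).symm

lemma stmt2_integrable {α : Type*} [MeasureSpace α] [IsFiniteMeasure (volume : Measure α)]
    {h : α → ℝ} (hm : Measurable h) {C : ℝ} (hb : ∀ x, |h x| ≤ C) :
    Integrable h volume :=
  ⟨hm.aestronglyMeasurable, HasFiniteIntegral.of_bounded (C := C)
    (Filter.Eventually.of_forall fun x => by simpa [Real.norm_eq_abs] using hb x)⟩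

lemma stmt2_zsmul_surj {c : ℤ} (hc : c ≠ 0) : Surjective (fun t : Stmt2T1 => c • t) := by
  intro y
  obtain ⟨r, hr⟩ : ∃ r : ℝ, (r : Stmt2T1) = y := Quotient.exists_rep y
  refine ⟨((r / c : ℝ) : Stmt2T1), ?_⟩
  show c • ((r / c : ℝ) : Stmt2T1) = y
  rw [← AddCircle.coe_zsmul, ← hr]
  congr 1
  field_simp
  rw [zsmul_eq_mul]; field_simp

noncomputable def stmt2Phi {a : ℕ} (A : Matrix (Fin a) (Fin a) ℤ) :
    (Fin a → Stmt2T1) →+ (Fin a → Stmt2T1) :=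
  AddMonoidHom.mk' (fun ω j => ∑ k, A k j • ω k) (by
    intro x y; funext j
    simp [smul_add, Finset.sum_add_distrib])

lemma stmt2Phi_apply {a : ℕ} (A : Matrix (Fin a) (Fin a) ℤ) (ω : Fin a → Stmt2T1) (j : Fin a) :
    stmt2Phi A ω j = ∑ k, A k j • ω k := rfl

lemma stmt2Phi_comp {a : ℕ} (A B : Matrix (Fin a) (Fin a) ℤ) (ω : Fin a → Stmt2T1) :
    stmt2Phi A (stmt2Phi B ω) = stmt2Phi (B * A) ω := by
  funext j
  simp only [stmt2Phi_apply, Matrix.mul_apply, Finset.smul_sum, Finset.sum_smul, smul_smul]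
  rw [Finset.sum_comm]
  congr 1; funext i; congr 1; funext k
  rw [mul_comm]

lemma stmt2Phi_one {a : ℕ} (ω : Fin a → Stmt2T1) : stmt2Phi 1 ω = ω := by
  funext j
  rw [stmt2Phi_apply]
  rw [Finset.sum_eq_single j]
  · simp
  · intro k _ hk; rw [Matrix.one_apply_ne hk, zero_smul]
  · intro h; exact absurd (Finset.mem_univ j) h

lemma stmt2Phi_cont {a : ℕ} (A : Matrix (Fin a) (Fin a) ℤ) : Continuous (stmt2Phi A) := by
  show Continuous (fun ω : Fin a → Stmt2T1 => fun j => ∑ k, A k j • ω k)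
  refine continuous_pi fun j => continuous_finset_sum _ fun k _ => ?_
  exact (continuous_apply k).zsmul (A k j)

lemma stmt2_coe_sum_zsmul {a : ℕ} (c : Fin a → ℤ) (v : Fin a → ℝ) :
    ∑ k, c k • ((v k : ℝ) : Stmt2T1) = ((∑ k, (c k : ℝ) * v k : ℝ) : Stmt2T1) := by
  let π : ℝ →+ Stmt2T1 := QuotientAddGroup.mk' _
  have hπ : ∀ r : ℝ, π r = (r : Stmt2T1) := fun r => rfl
  simp_rw [← hπ, ← map_zsmul π, ← map_sum, zsmul_eq_mul]

lemma stmt2Phi_surj {a : ℕ} (A : Matrix (Fin a) (Fin a) ℤ) (hA : A.det ≠ 0) :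
    Surjective (stmt2Phi A) := by
  intro y
  choose x hx using fun i => Quotient.exists_rep (y i)
  have hx' : ∀ i, ((x i : ℝ) : Stmt2T1) = y i := hx
  set B : Matrix (Fin a) (Fin a) ℝ := A.map (Int.cast : ℤ → ℝ) with hB
  have hdet : IsUnit B.det := by
    rw [hB, show A.map (Int.cast : ℤ → ℝ) = (Int.castRingHom ℝ).mapMatrix A from rfl,
      ← RingHom.map_det]
    simpa using isUnit_iff_ne_zero.mpr (by exact_mod_cast hA : ((A.det : ℝ)) ≠ 0)
  set v : Fin a → ℝ := Matrix.vecMul x B⁻¹ with hv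
  have hBv : Matrix.vecMul v B = x := by
    rw [hv, Matrix.vecMul_vecMul, Matrix.nonsing_inv_mul B hdet, Matrix.vecMul_one]
  have hsolve : ∀ j, ∑ k, (A k j : ℝ) * v k = x j := by
    intro j
    have := congrFun hBv j
    simp only [Matrix.vecMul, dotProduct, Matrix.map_apply, hB] at this
    rw [← this]
    exact Finset.sum_congr rfl fun k _ => mul_comm _ _
  refine ⟨fun i => ((v i : ℝ) : Stmt2T1), ?_⟩
  funext j
  rw [stmt2Phi_apply, stmt2_coe_sum_zsmul, hsolve, hx']

lemma stmt2Phi_mp {a : ℕ} (A : Matrix (Fin a) (Fin a) ℤ) (hA : A.det ≠ 0) :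
    MeasurePreserving (stmt2Phi A) volume volume :=
  stmt2_mp_hom (stmt2Phi A) (stmt2Phi_cont A) (stmt2Phi_surj A hA)

lemma stmt2_smul_mp {a : ℕ} (c : ℤ) (hc : c ≠ 0) :
    MeasurePreserving (fun ω : Fin a → Stmt2T1 => c • ω) volume volume := by
  refine stmt2_mp_hom (G := Fin a → Stmt2T1) (H := Fin a → Stmt2T1)
    (zsmulAddGroupHom c) (continuous_zsmul c) ?_
  intro y
  choose x hx using fun i => stmt2_zsmul_surj hc (y i)
  exact ⟨x, funext fun i => hx i⟩

noncomputable def stmt2Row {a : ℕ} (c : Fin a → ℤ) : (Fin a → Stmt2T1) →+ Stmt2T1 :=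
  AddMonoidHom.mk' (fun y => ∑ j, c j • y j) (by
    intro x y; simp [smul_add, Finset.sum_add_distrib])

lemma stmt2Row_apply {a : ℕ} (c : Fin a → ℤ) (y : Fin a → Stmt2T1) :
    stmt2Row c y = ∑ j, c j • y j := rfl

lemma stmt2Row_mp {a : ℕ} (c : Fin a → ℤ) (hc : ∃ j, c j ≠ 0) :
    MeasurePreserving (stmt2Row c) volume volume := by
  refine stmt2_mp_hom (G := Fin a → Stmt2T1) (H := Stmt2T1) (stmt2Row c) ?_ ?_
  · show Continuous (fun y : Fin a → Stmt2T1 => ∑ j, c j • y j)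
    exact continuous_finset_sum _ fun k _ => (continuous_apply k).zsmul (c k)
  · intro t
    obtain ⟨j₀, hj₀⟩ := hc
    obtain ⟨u, hu⟩ := stmt2_zsmul_surj hj₀ t
    refine ⟨Pi.single j₀ u, ?_⟩
    rw [stmt2Row_apply, Finset.sum_eq_single j₀]
    · rw [Pi.single_eq_same]; exact hu
    · intro j _ hj; rw [Pi.single_eq_of_ne hj, smul_zero]
    · intro h; exact absurd (Finset.mem_univ j₀) h

lemma stmt2_mulVec_e0 {a : ℕ} (A : Matrix (Fin (a+1)) (Fin (a+1)) ℤ) :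
    A.mulVec (fun i => if i = 0 then 1 else 0) = fun i => A i 0 := by
  funext i
  simp only [Matrix.mulVec, dotProduct, mul_ite, mul_one, mul_zero,
    Finset.sum_ite_eq', Finset.mem_univ, if_true]

lemma stmt2_measurable_cons {a : ℕ} (t : Stmt2T1) :
    Measurable (fun y : Fin a → Stmt2T1 => (Fin.cons t y : Fin (a+1) → Stmt2T1)) := by
  refine measurable_pi_lambda _ fun j => ?_
  refine Fin.cases ?_ ?_ j
  · simpa using measurable_const
  · intro j'; simpa using measurable_pi_apply j'

end Stmt2Aux

/-- Lemma 4.3(2): with `s, f, d, M` as in case (1), if `p` is the least positive integer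
such that `e₁` is an eigenvector of `M^p`, with eigenvalue `λ ∈ ℤ`, then there is a
function `g : 𝕋 → ℝ` with `s(ω₁^{d^{p−1}}) = g(ω₁^λ) − g(ω₁^{d^p})` for almost every
`ω₁ ∈ 𝕋` (written additively on `𝕋 = ℝ/ℤ`). -/
theorem stmt_2 (n : ℕ) (hn : 0 < n)
    (s : AddCircle (1 : ℝ) → ℝ) (f : (Fin n → AddCircle (1 : ℝ)) → ℝ)
    (hs_meas : Measurable s) (hf_meas : Measurable f)
    (Cs : ℝ) (hs_bdd : ∀ x, |s x| ≤ Cs)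
    (Cf : ℝ) (hf_bdd : ∀ x, |f x| ≤ Cf)
    (d : ℤ) (hd : d ≠ 0)
    (M : Matrix (Fin n) (Fin n) ℤ) (hM : M.det ≠ 0)
    (heq : ∀ᵐ ω : Fin n → AddCircle (1 : ℝ),
      s (ω ⟨0, hn⟩) =
        f (fun j => ∑ k, M k j • ω k) - f (fun k => d • ω k))
    (p : ℕ) (hp : 0 < p) (lam : ℤ)
    (hpeig : (M ^ p).mulVec (fun i => if i = ⟨0, hn⟩ then 1 else 0) =
      lam • (fun i => if i = ⟨0, hn⟩ then (1 : ℤ) else 0))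
    (hpleast : ∀ q : ℕ, 0 < q → q < p → ∀ mu : ℤ,
      (M ^ q).mulVec (fun i => if i = ⟨0, hn⟩ then 1 else 0) ≠
        mu • (fun i => if i = ⟨0, hn⟩ then (1 : ℤ) else 0)) :
    ∃ g : AddCircle (1 : ℝ) → ℝ, ∀ᵐ ω₁ : AddCircle (1 : ℝ),
      s ((d ^ (p - 1)) • ω₁) = g (lam • ω₁) - g ((d ^ p) • ω₁) := by
  classical
  obtain ⟨m, rfl⟩ : ∃ m, n = m + 1 := ⟨n - 1, (Nat.succ_pred_eq_of_pos hn).symm⟩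
  have hz : (⟨0, hn⟩ : Fin (m+1)) = (0 : Fin (m+1)) := rfl
  rw [hz] at hpeig
  simp only [hz] at heq hpleast
  -- basic facts
  have hEQ : ∀ᵐ ω : Fin (m+1) → Stmt2T1, s (ω 0) = f (stmt2Phi M ω) - f (d • ω) := heq
  have hcol : ∀ i, (M ^ p) i 0 = if i = 0 then lam else 0 := by
    intro i
    rw [stmt2_mulVec_e0] at hpeig
    have := congrFun hpeig i
    simpa [mul_ite] using this
  set N : Matrix (Fin m) (Fin m) ℤ := (M ^ p).submatrix Fin.succ Fin.succ with hNdef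
  have hdetMp : (M ^ p).det = lam * N.det := by
    rw [Matrix.det_succ_column_zero, Finset.sum_eq_single 0]
    · simp [hcol 0, Fin.succAbove_zero, hNdef]
    · intro i _ hi; simp [hcol i, hi]
    · simp
  have hMp : (M ^ p).det ≠ 0 := by
    rw [Matrix.det_pow]; exact pow_ne_zero _ hM
  have hlam : lam ≠ 0 := fun h => hMp (by rw [hdetMp, h, zero_mul])
  have hN : N.det ≠ 0 := fun h => hMp (by rw [hdetMp, h, mul_zero])
  -- the integral of s vanishes
  have hfint : ∀ (φ : (Fin (m+1) → Stmt2T1) → (Fin (m+1) → Stmt2T1)), Measurable φ →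
      Integrable (fun ω => f (φ ω)) (volume : Measure (Fin (m+1) → Stmt2T1)) :=
    fun φ hφ => stmt2_integrable (hf_meas.comp hφ) (fun x => hf_bdd _)
  have hs0 : ∫ t : Stmt2T1, s t = 0 := by
    have hproj : MeasurePreserving (fun ω : Fin (m+1) → Stmt2T1 => ω 0) volume volume := by
      refine stmt2_mp_hom (G := Fin (m+1) → Stmt2T1) (H := Stmt2T1)
        (Pi.evalAddMonoidHom (fun _ => Stmt2T1) 0) (continuous_apply 0) ?_
      intro t; exact ⟨fun _ => t, rfl⟩
    have h1 : ∫ ω : Fin (m+1) → Stmt2T1, s (ω 0) = ∫ t : Stmt2T1, s t :=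
      stmt2_mp_integral hproj hs_meas.aestronglyMeasurable
    have h2 : ∫ ω : Fin (m+1) → Stmt2T1, s (ω 0) = 0 := by
      rw [integral_congr_ae hEQ]
      rw [integral_sub (hfint _ (stmt2Phi_cont M).measurable)
        (hfint _ (continuous_zsmul d).measurable)]
      rw [stmt2_mp_integral (stmt2Phi_mp M hM) hf_meas.aestronglyMeasurable,
        stmt2_mp_integral (stmt2_smul_mp d hd) hf_meas.aestronglyMeasurable, sub_self]
    rw [← h1, h2]
  -- telescoping
  have key : ∀ j, j ≤ p → ∀ᵐ ω : Fin (m+1) → Stmt2T1,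
      ∑ k ∈ Finset.range j, s (stmt2Phi (M ^ k) ((d ^ (p-1-k) : ℤ) • ω) 0)
        = f (stmt2Phi (M ^ j) ((d ^ (p-j) : ℤ) • ω)) - f ((d ^ p : ℤ) • ω) := by
    intro j
    induction j with
    | zero =>
        intro _
        filter_upwards with ω
        simp [pow_zero, stmt2Phi_one]
    | succ j ih =>
        intro hj
        have hjp : j < p := Nat.lt_of_succ_le hj
        have harith : p - j = (p - 1 - j) + 1 := by omega
        have hd2 : (d : ℤ) ^ (p - j) = d * d ^ (p - 1 - j) := by
          rw [harith, pow_succ, mul_comm]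
        have hR : MeasurePreserving
            (fun ω : Fin (m+1) → Stmt2T1 => stmt2Phi (M ^ j) ((d ^ (p-1-j) : ℤ) • ω))
            volume volume :=
          (stmt2Phi_mp (M ^ j) (by rw [Matrix.det_pow]; exact pow_ne_zero _ hM)).comp
            (stmt2_smul_mp _ (pow_ne_zero _ hd))
        have h2 := hR.quasiMeasurePreserving.ae hEQ
        filter_upwards [ih (le_of_lt hjp), h2] with ω h1 h2'
        rw [Finset.sum_range_succ, h1]
        have e1 : stmt2Phi M (stmt2Phi (M ^ j) ((d ^ (p-1-j) : ℤ) • ω))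
            = stmt2Phi (M ^ (j+1)) ((d ^ (p-1-j) : ℤ) • ω) := by
          rw [stmt2Phi_comp, ← pow_succ]
        have e2 : d • stmt2Phi (M ^ j) ((d ^ (p-1-j) : ℤ) • ω)
            = stmt2Phi (M ^ j) ((d ^ (p-j) : ℤ) • ω) := by
          rw [← map_zsmul, smul_smul, ← hd2]
        rw [e1, e2] at h2'
        rw [h2']
        have harith3 : p - 1 - j = p - (j+1) := by omega
        rw [harith3]
        ring
  have hA := key p le_rfl
  have hA2 : ∀ᵐ ω : Fin (m+1) → Stmt2T1,
      ∑ k ∈ Finset.range p, s (stmt2Phi (M ^ k) ((d ^ (p-1-k) : ℤ) • ω) 0)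
        = f (stmt2Phi (M ^ p) ω) - f ((d ^ p : ℤ) • ω) := by
    filter_upwards [hA] with ω h
    rw [h, Nat.sub_self, pow_zero, one_smul]
  -- Fubini
  set F := MeasurableEquiv.piFinSuccAbove (fun _ : Fin (m+1) => Stmt2T1) 0 with hF
  have hFsymm : ∀ z : Stmt2T1 × (Fin m → Stmt2T1), F.symm z = Fin.cons z.1 z.2 := by
    intro z
    simp [hF, MeasurableEquiv.piFinSuccAbove, Fin.insertNth_zero, Fin.consEquiv]
  have mpF : MeasurePreserving F.symm
      (volume : Measure (Stmt2T1 × (Fin m → Stmt2T1)))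
      (volume : Measure (Fin (m+1) → Stmt2T1)) := by
    rw [Measure.volume_eq_prod, volume_pi]
    exact (measurePreserving_piFinSuccAbove (fun _ : Fin (m+1) => (volume : Measure Stmt2T1)) 0).symm
  have hprod := mpF.quasiMeasurePreserving.ae hA2
  simp only [hFsymm] at hprod
  rw [Measure.volume_eq_prod] at hprod
  have hae := Measure.ae_ae_of_ae_prod hprod
  -- conclude
  refine ⟨fun t => ∫ y : Fin m → Stmt2T1, f (Fin.cons t y), ?_⟩
  filter_upwards [hae] with x hx
  -- integrability of terms
  have hmeas_term : ∀ k : ℕ, Measurable (fun y : Fin m → Stmt2T1 =>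
      stmt2Phi (M ^ k) ((d ^ (p-1-k) : ℤ) • (Fin.cons x y : Fin (m+1) → Stmt2T1)) 0) := by
    intro k
    exact (measurable_pi_apply 0).comp ((stmt2Phi_cont _).measurable.comp
      ((continuous_zsmul ((d : ℤ) ^ (p-1-k))).measurable.comp (stmt2_measurable_cons x)))
  have hterm : ∀ k ∈ Finset.range p, Integrable (fun y : Fin m → Stmt2T1 =>
      s (stmt2Phi (M ^ k) ((d ^ (p-1-k) : ℤ) • (Fin.cons x y : Fin (m+1) → Stmt2T1)) 0)) volume :=
    fun k _ => stmt2_integrable (hs_meas.comp (hmeas_term k)) (fun y => hs_bdd _)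
  have hintA : Integrable
      (fun y : Fin m → Stmt2T1 => f (stmt2Phi (M ^ p) (Fin.cons x y))) volume :=
    stmt2_integrable (hf_meas.comp ((stmt2Phi_cont _).measurable.comp
      (stmt2_measurable_cons x))) (fun y => hf_bdd _)
  have hintB : Integrable (fun y : Fin m → Stmt2T1 =>
      f ((d^p : ℤ) • (Fin.cons x y : Fin (m+1) → Stmt2T1))) volume :=
    stmt2_integrable (hf_meas.comp ((continuous_zsmul ((d:ℤ)^p)).measurable.comp
      (stmt2_measurable_cons x))) (fun y => hf_bdd _)
  -- value of the k = 0 term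
  have hk0 : ∀ y : Fin m → Stmt2T1,
      stmt2Phi (M ^ 0) ((d ^ (p-1-0) : ℤ) • (Fin.cons x y : Fin (m+1) → Stmt2T1)) 0
        = (d^(p-1) : ℤ) • x := by
    intro y
    rw [pow_zero, stmt2Phi_one]
    simp
  -- the k ≠ 0 terms integrate to zero
  have hkpos : ∀ k, 0 < k → k < p →
      ∫ y : Fin m → Stmt2T1,
        s (stmt2Phi (M ^ k) ((d ^ (p-1-k) : ℤ) • (Fin.cons x y : Fin (m+1) → Stmt2T1)) 0) = 0 := by
    intro k hkz hkp
    set c : ℤ := d ^ (p-1-k) with hc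
    set cc : Fin m → ℤ := fun i' => c * (M ^ k) (Fin.succ i') 0 with hcc
    have hdecomp : ∀ y : Fin m → Stmt2T1,
        stmt2Phi (M ^ k) (c • (Fin.cons x y : Fin (m+1) → Stmt2T1)) 0
          = (c * (M ^ k) 0 0) • x + stmt2Row cc y := by
      intro y
      rw [stmt2Phi_apply, Fin.sum_univ_succ, stmt2Row_apply]
      congr 1
      · rw [Pi.smul_apply, Fin.cons_zero, smul_smul, mul_comm]
      · refine Finset.sum_congr rfl fun i' _ => ?_
        rw [Pi.smul_apply, Fin.cons_succ, smul_smul, hcc, mul_comm]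
    have hccne : ∃ j, cc j ≠ 0 := by
      by_contra hno
      push_neg at hno
      refine hpleast k hkz hkp ((M ^ k) 0 0) ?_
      rw [stmt2_mulVec_e0]
      funext i
      refine Fin.cases ?_ ?_ i
      · simp
      · intro i'
        have h0 := hno i'
        rw [hcc] at h0
        have hcz : c ≠ 0 := pow_ne_zero _ hd
        have hM0 : (M ^ k) (Fin.succ i') 0 = 0 := by
          rcases mul_eq_zero.mp h0 with h | h
          · exact absurd h hcz
          · exact h
        simp [hM0, Fin.succ_ne_zero]
    simp only [hdecomp]
    rw [stmt2_mp_integral (h := fun t => s ((c * (M ^ k) 0 0) • x + t)) (stmt2Row_mp cc hccne)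
      ((hs_meas.comp (measurable_id.const_add _)).aestronglyMeasurable)]
    rw [stmt2_mp_integral (h := s) (measurePreserving_add_left volume ((c * (M ^ k) 0 0) • x))
      hs_meas.aestronglyMeasurable]
    exact hs0
  have hL : ∑ k ∈ Finset.range p, ∫ y : Fin m → Stmt2T1,
      s (stmt2Phi (M ^ k) ((d ^ (p-1-k) : ℤ) • (Fin.cons x y : Fin (m+1) → Stmt2T1)) 0)
      = s ((d^(p-1) : ℤ) • x) := by
    rw [Finset.sum_eq_single_of_mem 0 (Finset.mem_range.mpr hp)]
    · simp only [hk0]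
      simp
    · intro k hk hkne
      exact hkpos k (Nat.pos_of_ne_zero hkne) (Finset.mem_range.mp hk)
  -- the two f-integrals
  have hT : ∀ y : Fin m → Stmt2T1, stmt2Phi (M ^ p) (Fin.cons x y)
      = (Fin.cons (lam • x)
          ((fun j' => (M ^ p) 0 (Fin.succ j') • x) + stmt2Phi N y) : Fin (m+1) → Stmt2T1) := by
    intro y
    funext j
    refine Fin.cases ?_ ?_ j
    · simp [stmt2Phi_apply, Fin.sum_univ_succ, hcol, Fin.succ_ne_zero]
    · intro j'
      simp [stmt2Phi_apply, Fin.sum_univ_succ, hNdef, Matrix.submatrix_apply]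
  have hR1 : ∫ y : Fin m → Stmt2T1, f (stmt2Phi (M ^ p) (Fin.cons x y))
      = ∫ y : Fin m → Stmt2T1, f (Fin.cons (lam • x) y) := by
    simp only [hT]
    have mp2 : MeasurePreserving (fun y : Fin m → Stmt2T1 =>
        (fun j' => (M ^ p) 0 (Fin.succ j') • x) + stmt2Phi N y) volume volume :=
      (measurePreserving_add_left volume _).comp (stmt2Phi_mp N hN)
    exact stmt2_mp_integral mp2
      ((hf_meas.comp (stmt2_measurable_cons _)).aestronglyMeasurable)
  have hsmulcons : ∀ y : Fin m → Stmt2T1,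
      (d^p : ℤ) • (Fin.cons x y : Fin (m+1) → Stmt2T1)
        = (Fin.cons ((d^p : ℤ) • x) ((d^p : ℤ) • y) : Fin (m+1) → Stmt2T1) := by
    intro y; funext j
    refine Fin.cases ?_ ?_ j
    · simp
    · intro j'; simp
  have hR2 : ∫ y : Fin m → Stmt2T1, f ((d^p : ℤ) • (Fin.cons x y : Fin (m+1) → Stmt2T1))
      = ∫ y : Fin m → Stmt2T1, f (Fin.cons ((d^p : ℤ) • x) y) := by
    simp only [hsmulcons]
    exact stmt2_mp_integral (stmt2_smul_mp (a := m) _ (pow_ne_zero p hd))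
      ((hf_meas.comp (stmt2_measurable_cons _)).aestronglyMeasurable)
  calc s ((d ^ (p-1) : ℤ) • x)
      = ∑ k ∈ Finset.range p, ∫ y : Fin m → Stmt2T1,
          s (stmt2Phi (M ^ k) ((d ^ (p-1-k) : ℤ) • (Fin.cons x y : Fin (m+1) → Stmt2T1)) 0) :=
        hL.symm
    _ = ∫ y : Fin m → Stmt2T1, ∑ k ∈ Finset.range p,
          s (stmt2Phi (M ^ k) ((d ^ (p-1-k) : ℤ) • (Fin.cons x y : Fin (m+1) → Stmt2T1)) 0) :=
        (integral_finset_sum _ hterm).symm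
    _ = ∫ y : Fin m → Stmt2T1, (f (stmt2Phi (M ^ p) (Fin.cons x y))
          - f ((d^p : ℤ) • (Fin.cons x y : Fin (m+1) → Stmt2T1))) := integral_congr_ae hx
    _ = (∫ y : Fin m → Stmt2T1, f (stmt2Phi (M ^ p) (Fin.cons x y)))
        - ∫ y : Fin m → Stmt2T1, f ((d^p : ℤ) • (Fin.cons x y : Fin (m+1) → Stmt2T1)) :=
        integral_sub hintA hintB
    _ = _ := by rw [hR1, hR2]
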